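/- arXiv:2410.20289 — 2 statements merged into one kernel-verified Lean document; each statement's English description precedes it below -/
import Mathlib

section
/- Let d ∈ ℕ with P_d > 0 and P_{d+1} < 1. If k_d(n⁻, n⁰, n⁺) = 1 − P_d, then n⁻ = 0 and n⁺ = 0, i.e. (n⁻, n⁰, n⁺) = (0, n, 0). -/
/-- Total weight `W(v) = Σ_{i : v_i ≠ 0} w_i` of the axes with at least one available split. -/
noncomputable def bartW (p : ℕ) (w : Fin p → ℝ) (v : Fin p → ℕ) : ℝ :=
  ∑ i ∈ Finset.univ.filter (fun i => v i ≠ 0), w i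

/-- The BART sub-correlation function `k_d(n⁻, n⁰, n⁺)`, defined by well-founded recursion
on `Σ_i (n⁻_i + n⁺_i)`. -/
noncomputable def bartK (p : ℕ) (w : Fin p → ℝ) (P : ℕ → ℝ)
    (d : ℕ) (nm n0 np : Fin p → ℕ) : ℝ :=
  if ∀ i, nm i + n0 i + np i = 0 then 1
  else
    1 - P d * (1 - (1 / bartW p w (fun i => nm i + n0 i + np i)) *
      ∑ i ∈ Finset.univ.filter (fun i => nm i + n0 i + np i ≠ 0),
        (w i / ((nm i + n0 i + np i : ℕ) : ℝ)) *
          ((∑ k ∈ (Finset.range (nm i)).attach,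
              bartK p w P (d+1) (Function.update nm i k.1) n0 np) +
           (∑ k ∈ (Finset.range (np i)).attach,
              bartK p w P (d+1) nm n0 (Function.update np i k.1))))
termination_by ∑ i, (nm i + np i)
decreasing_by
  · have hk : k.1 < nm i := Finset.mem_range.mp k.2
    refine Finset.sum_lt_sum (fun j _ => ?_) ⟨i, Finset.mem_univ i, ?_⟩
    · rcases eq_or_ne j i with rfl | hj
      · simp only [Function.update_self]; omega
      · simp only [Function.update_of_ne hj]; omega
    · simp only [Function.update_self]; omega
  · have hk : k.1 < np i := Finset.mem_range.mp k.2
    refine Finset.sum_lt_sum (fun j _ => ?_) ⟨i, Finset.mem_univ i, ?_⟩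
    · rcases eq_or_ne j i with rfl | hj
      · simp only [Function.update_self]; omega
      · simp only [Function.update_of_ne hj]; omega
    · simp only [Function.update_self]; omega

lemma bartK_bounds (p : ℕ) (w : Fin p → ℝ) (hw : ∀ i, 0 < w i)
    (P : ℕ → ℝ) (hP : ∀ d, P d ∈ Set.Icc (0:ℝ) 1) :
    ∀ N d nm n0 np, (∑ i, (nm i + np i)) = N →
      0 ≤ bartK p w P d nm n0 np ∧ bartK p w P d nm n0 np ≤ 1 := by
  intro N
  induction N using Nat.strong_induction_on with
  | _ N IH =>
  intro d nm n0 np hN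
  rw [bartK]
  split_ifs with h0
  · exact ⟨zero_le_one, le_refl 1⟩
  · set F := Finset.univ.filter (fun i => nm i + n0 i + np i ≠ 0) with hF
    have hWpos : 0 < bartW p w (fun i => nm i + n0 i + np i) := by
      push_neg at h0
      obtain ⟨i, hi⟩ := h0
      apply Finset.sum_pos (fun j _ => hw j)
      exact ⟨i, Finset.mem_filter.mpr ⟨Finset.mem_univ i, hi⟩⟩
    have hterm : ∀ i ∈ F,
        0 ≤ (w i / ((nm i + n0 i + np i : ℕ) : ℝ)) *
          ((∑ k ∈ (Finset.range (nm i)).attach,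
              bartK p w P (d+1) (Function.update nm i k.1) n0 np) +
           (∑ k ∈ (Finset.range (np i)).attach,
              bartK p w P (d+1) nm n0 (Function.update np i k.1))) ∧
        (w i / ((nm i + n0 i + np i : ℕ) : ℝ)) *
          ((∑ k ∈ (Finset.range (nm i)).attach,
              bartK p w P (d+1) (Function.update nm i k.1) n0 np) +
           (∑ k ∈ (Finset.range (np i)).attach,
              bartK p w P (d+1) nm n0 (Function.update np i k.1))) ≤ w i := by
      intro i hiF
      have hi : nm i + n0 i + np i ≠ 0 := (Finset.mem_filter.mp hiF).2
      have hAbd : ∀ k ∈ (Finset.range (nm i)).attach,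
          0 ≤ bartK p w P (d+1) (Function.update nm i k.1) n0 np ∧
          bartK p w P (d+1) (Function.update nm i k.1) n0 np ≤ 1 := by
        intro k _
        have hk : k.1 < nm i := Finset.mem_range.mp k.2
        have hlt : (∑ j, (Function.update nm i k.1 j + np j)) < N := by
          rw [← hN]
          refine Finset.sum_lt_sum (fun j _ => ?_) ⟨i, Finset.mem_univ i, ?_⟩
          · rcases eq_or_ne j i with rfl | hj
            · simp only [Function.update_self]; omega
            · simp only [Function.update_of_ne hj]; omega
          · simp only [Function.update_self]; omega
        exact IH _ hlt (d+1) _ n0 np rfl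
      have hBbd : ∀ k ∈ (Finset.range (np i)).attach,
          0 ≤ bartK p w P (d+1) nm n0 (Function.update np i k.1) ∧
          bartK p w P (d+1) nm n0 (Function.update np i k.1) ≤ 1 := by
        intro k _
        have hk : k.1 < np i := Finset.mem_range.mp k.2
        have hlt : (∑ j, (nm j + Function.update np i k.1 j)) < N := by
          rw [← hN]
          refine Finset.sum_lt_sum (fun j _ => ?_) ⟨i, Finset.mem_univ i, ?_⟩
          · rcases eq_or_ne j i with rfl | hj
            · simp only [Function.update_self]; omega
            · simp only [Function.update_of_ne hj]; omega
          · simp only [Function.update_self]; omega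
        exact IH _ hlt (d+1) nm n0 _ rfl
      have hA0 : 0 ≤ ∑ k ∈ (Finset.range (nm i)).attach,
          bartK p w P (d+1) (Function.update nm i k.1) n0 np :=
        Finset.sum_nonneg (fun k hk => (hAbd k hk).1)
      have hA1 : (∑ k ∈ (Finset.range (nm i)).attach,
          bartK p w P (d+1) (Function.update nm i k.1) n0 np) ≤ (nm i : ℝ) := by
        calc _ ≤ ∑ k ∈ (Finset.range (nm i)).attach, (1:ℝ) :=
              Finset.sum_le_sum (fun k hk => (hAbd k hk).2)
          _ = (nm i : ℝ) := by simp
      have hB0 : 0 ≤ ∑ k ∈ (Finset.range (np i)).attach,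
          bartK p w P (d+1) nm n0 (Function.update np i k.1) :=
        Finset.sum_nonneg (fun k hk => (hBbd k hk).1)
      have hB1 : (∑ k ∈ (Finset.range (np i)).attach,
          bartK p w P (d+1) nm n0 (Function.update np i k.1)) ≤ (np i : ℝ) := by
        calc _ ≤ ∑ k ∈ (Finset.range (np i)).attach, (1:ℝ) :=
              Finset.sum_le_sum (fun k hk => (hBbd k hk).2)
          _ = (np i : ℝ) := by simp
      have hnpos : (0:ℝ) < ((nm i + n0 i + np i : ℕ) : ℝ) := by
        exact_mod_cast Nat.pos_of_ne_zero hi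
      have hwi := hw i
      constructor
      · positivity
      · rw [div_mul_eq_mul_div, div_le_iff₀ hnpos]
        have hle : (nm i : ℝ) + (np i : ℝ) ≤ ((nm i + n0 i + np i : ℕ) : ℝ) := by
          push_cast; have : (0:ℝ) ≤ (n0 i : ℝ) := Nat.cast_nonneg _; linarith
        nlinarith
    have hS0 : 0 ≤ ∑ i ∈ F, (w i / ((nm i + n0 i + np i : ℕ) : ℝ)) *
          ((∑ k ∈ (Finset.range (nm i)).attach,
              bartK p w P (d+1) (Function.update nm i k.1) n0 np) +
           (∑ k ∈ (Finset.range (np i)).attach,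
              bartK p w P (d+1) nm n0 (Function.update np i k.1))) :=
      Finset.sum_nonneg (fun i hi => (hterm i hi).1)
    have hS1 : (∑ i ∈ F, (w i / ((nm i + n0 i + np i : ℕ) : ℝ)) *
          ((∑ k ∈ (Finset.range (nm i)).attach,
              bartK p w P (d+1) (Function.update nm i k.1) n0 np) +
           (∑ k ∈ (Finset.range (np i)).attach,
              bartK p w P (d+1) nm n0 (Function.update np i k.1))))
          ≤ bartW p w (fun i => nm i + n0 i + np i) :=
      Finset.sum_le_sum (fun i hi => (hterm i hi).2)
    have hPl := (hP d).1
    have hPr := (hP d).2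
    have hinv : 0 < 1 / bartW p w (fun i => nm i + n0 i + np i) := by positivity
    have hSle : (1 / bartW p w (fun i => nm i + n0 i + np i)) *
        (∑ i ∈ F, (w i / ((nm i + n0 i + np i : ℕ) : ℝ)) *
          ((∑ k ∈ (Finset.range (nm i)).attach,
              bartK p w P (d+1) (Function.update nm i k.1) n0 np) +
           (∑ k ∈ (Finset.range (np i)).attach,
              bartK p w P (d+1) nm n0 (Function.update np i k.1)))) ≤ 1 := by
      rw [one_div, inv_mul_le_iff₀ hWpos, mul_one]
      exact hS1
    have hSge : 0 ≤ (1 / bartW p w (fun i => nm i + n0 i + np i)) *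
        (∑ i ∈ F, (w i / ((nm i + n0 i + np i : ℕ) : ℝ)) *
          ((∑ k ∈ (Finset.range (nm i)).attach,
              bartK p w P (d+1) (Function.update nm i k.1) n0 np) +
           (∑ k ∈ (Finset.range (np i)).attach,
              bartK p w P (d+1) nm n0 (Function.update np i k.1)))) :=
      mul_nonneg hinv.le hS0
    constructor
    · nlinarith
    · nlinarith

lemma bartK_ge (p : ℕ) (w : Fin p → ℝ) (hw : ∀ i, 0 < w i)
    (P : ℕ → ℝ) (hP : ∀ d, P d ∈ Set.Icc (0:ℝ) 1)
    (d : ℕ) (nm n0 np : Fin p → ℕ) :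
    1 - P d ≤ bartK p w P d nm n0 np := by
  rw [bartK]
  split_ifs with h0
  · linarith [(hP d).1]
  · have hWpos : 0 < bartW p w (fun i => nm i + n0 i + np i) := by
      push_neg at h0
      obtain ⟨i, hi⟩ := h0
      apply Finset.sum_pos (fun j _ => hw j)
      exact ⟨i, Finset.mem_filter.mpr ⟨Finset.mem_univ i, hi⟩⟩
    have hS0 : 0 ≤ ∑ i ∈ Finset.univ.filter (fun i => nm i + n0 i + np i ≠ 0),
        (w i / ((nm i + n0 i + np i : ℕ) : ℝ)) *
          ((∑ k ∈ (Finset.range (nm i)).attach,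
              bartK p w P (d+1) (Function.update nm i k.1) n0 np) +
           (∑ k ∈ (Finset.range (np i)).attach,
              bartK p w P (d+1) nm n0 (Function.update np i k.1))) := by
      apply Finset.sum_nonneg
      intro i _
      have hA0 : 0 ≤ ∑ k ∈ (Finset.range (nm i)).attach,
          bartK p w P (d+1) (Function.update nm i k.1) n0 np :=
        Finset.sum_nonneg (fun k _ => (bartK_bounds p w hw P hP _ _ _ _ _ rfl).1)
      have hB0 : 0 ≤ ∑ k ∈ (Finset.range (np i)).attach,
          bartK p w P (d+1) nm n0 (Function.update np i k.1) :=
        Finset.sum_nonneg (fun k _ => (bartK_bounds p w hw P hP _ _ _ _ _ rfl).1)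
      have : (0:ℝ) ≤ w i / ((nm i + n0 i + np i : ℕ) : ℝ) :=
        div_nonneg (hw i).le (Nat.cast_nonneg _)
      nlinarith
    have hinv : 0 < 1 / bartW p w (fun i => nm i + n0 i + np i) := by positivity
    nlinarith [mul_nonneg hinv.le hS0, (hP d).1]

/-- Property 5 of Theorem 2: if `P_d > 0`, `P_{d+1} < 1` and `k_d(n⁻, n⁰, n⁺) = 1 - P_d`,
then `n⁻ = 0` and `n⁺ = 0`, i.e. `(n⁻, n⁰, n⁺) = (0, n, 0)`. -/
theorem bartK_eq_lower_bound_implies_corner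
    (p : ℕ) (hp : 1 ≤ p) (w : Fin p → ℝ) (hw : ∀ i, 0 < w i)
    (P : ℕ → ℝ) (hP : ∀ d, P d ∈ Set.Icc (0 : ℝ) 1)
    (d : ℕ) (hPd : 0 < P d) (hPd1 : P (d + 1) < 1) (nm n0 np : Fin p → ℕ)
    (h : bartK p w P d nm n0 np = 1 - P d) :
    nm = 0 ∧ np = 0 := by
  by_contra hc
  have hex : ∃ i, nm i + np i ≠ 0 := by
    by_contra h'
    push_neg at h'
    exact hc ⟨funext fun i => by have := h' i; simp only [Pi.zero_apply]; omega,
              funext fun i => by have := h' i; simp only [Pi.zero_apply]; omega⟩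
  obtain ⟨i, hi⟩ := hex
  have hni : nm i + n0 i + np i ≠ 0 := by omega
  have h0 : ¬ ∀ j, nm j + n0 j + np j = 0 := fun hall => hni (hall i)
  rw [bartK, if_neg h0] at h
  set S := (1 / bartW p w (fun i => nm i + n0 i + np i)) *
      ∑ i ∈ Finset.univ.filter (fun i => nm i + n0 i + np i ≠ 0),
        (w i / ((nm i + n0 i + np i : ℕ) : ℝ)) *
          ((∑ k ∈ (Finset.range (nm i)).attach,
              bartK p w P (d+1) (Function.update nm i k.1) n0 np) +
           (∑ k ∈ (Finset.range (np i)).attach,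
              bartK p w P (d+1) nm n0 (Function.update np i k.1))) with hSdef
  have hSzero : S = 0 := by
    have : P d * (1 - S) = P d * 1 := by linarith
    have := mul_left_cancel₀ hPd.ne' this
    linarith
  have hWpos : 0 < bartW p w (fun i => nm i + n0 i + np i) := by
    apply Finset.sum_pos (fun j _ => hw j)
    exact ⟨i, Finset.mem_filter.mpr ⟨Finset.mem_univ i, hni⟩⟩
  have hq : 0 < 1 - P (d+1) := by linarith
  have htermnn : ∀ j ∈ Finset.univ.filter (fun i => nm i + n0 i + np i ≠ 0),
      0 ≤ (w j / ((nm j + n0 j + np j : ℕ) : ℝ)) *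
          ((∑ k ∈ (Finset.range (nm j)).attach,
              bartK p w P (d+1) (Function.update nm j k.1) n0 np) +
           (∑ k ∈ (Finset.range (np j)).attach,
              bartK p w P (d+1) nm n0 (Function.update np j k.1))) := by
    intro j _
    have hA0 : 0 ≤ ∑ k ∈ (Finset.range (nm j)).attach,
        bartK p w P (d+1) (Function.update nm j k.1) n0 np :=
      Finset.sum_nonneg (fun k _ => (bartK_bounds p w hw P hP _ _ _ _ _ rfl).1)
    have hB0 : 0 ≤ ∑ k ∈ (Finset.range (np j)).attach,
        bartK p w P (d+1) nm n0 (Function.update np j k.1) :=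
      Finset.sum_nonneg (fun k _ => (bartK_bounds p w hw P hP _ _ _ _ _ rfl).1)
    have : (0:ℝ) ≤ w j / ((nm j + n0 j + np j : ℕ) : ℝ) :=
      div_nonneg (hw j).le (Nat.cast_nonneg _)
    nlinarith
  have htermpos : 0 < (w i / ((nm i + n0 i + np i : ℕ) : ℝ)) *
          ((∑ k ∈ (Finset.range (nm i)).attach,
              bartK p w P (d+1) (Function.update nm i k.1) n0 np) +
           (∑ k ∈ (Finset.range (np i)).attach,
              bartK p w P (d+1) nm n0 (Function.update np i k.1))) := by
    have hA0 : 0 ≤ ∑ k ∈ (Finset.range (nm i)).attach,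
        bartK p w P (d+1) (Function.update nm i k.1) n0 np :=
      Finset.sum_nonneg (fun k _ => (bartK_bounds p w hw P hP _ _ _ _ _ rfl).1)
    have hB0 : 0 ≤ ∑ k ∈ (Finset.range (np i)).attach,
        bartK p w P (d+1) nm n0 (Function.update np i k.1) :=
      Finset.sum_nonneg (fun k _ => (bartK_bounds p w hw P hP _ _ _ _ _ rfl).1)
    have hABpos : 0 < (∑ k ∈ (Finset.range (nm i)).attach,
        bartK p w P (d+1) (Function.update nm i k.1) n0 np) +
        (∑ k ∈ (Finset.range (np i)).attach,
          bartK p w P (d+1) nm n0 (Function.update np i k.1)) := by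
      have : nm i ≠ 0 ∨ np i ≠ 0 := by omega
      rcases this with h1 | h1
      · have hApos : 0 < ∑ k ∈ (Finset.range (nm i)).attach,
            bartK p w P (d+1) (Function.update nm i k.1) n0 np := by
          apply Finset.sum_pos
          · intro k _
            have := bartK_ge p w hw P hP (d+1) (Function.update nm i k.1) n0 np
            linarith
          · rw [Finset.attach_nonempty_iff, Finset.nonempty_range_iff]
            exact h1
        linarith
      · have hBpos : 0 < ∑ k ∈ (Finset.range (np i)).attach,
            bartK p w P (d+1) nm n0 (Function.update np i k.1) := by
          apply Finset.sum_pos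
          · intro k _
            have := bartK_ge p w hw P hP (d+1) nm n0 (Function.update np i k.1)
            linarith
          · rw [Finset.attach_nonempty_iff, Finset.nonempty_range_iff]
            exact h1
        linarith
    have hwpos : (0:ℝ) < w i / ((nm i + n0 i + np i : ℕ) : ℝ) := by
      have : (0:ℝ) < ((nm i + n0 i + np i : ℕ) : ℝ) := by
        exact_mod_cast Nat.pos_of_ne_zero hni
      exact div_pos (hw i) this
    exact mul_pos hwpos hABpos
  have hSpos : 0 < S := by
    apply mul_pos (by positivity)
    exact Finset.sum_pos' htermnn ⟨i, Finset.mem_filter.mpr ⟨Finset.mem_univ i, hni⟩, htermpos⟩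
  linarith
end

section
/- For every D ∈ ℕ, d ≤ D, γ ∈ [0,1] and all n⁻, n⁰, n⁺ ∈ ℕ^p: (i) k^D_{d,γ}(n⁻, n⁰, n⁺) = (1−γ)·k^D_{d,0}(n⁻, n⁰, n⁺) + γ·k^D_{d,1}(n⁻, n⁰, n⁺), so that varying γ linearly interpolates between the two extreme truncated functions; and (ii) k^D_{d,0}(n⁻, n⁰, n⁺) ≤ k_d(n⁻, n⁰, n⁺) ≤ k^D_{d,1}(n⁻, n⁰, n⁺), i.e. the truncated functions at γ = 0 and γ = 1 are respectively a lower and an upper bound on the exact sub-correlation function. -/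
/-- The truncated BART sub-correlation function `k^D_{d,γ}`: same recursion as `k_d` for
`d < D`, with base cases `1` if `n = 0`, `1` at depth `D` if `n⁰ = 0`, and
`1 - (1-γ)·P_D` at depth `D` if `n⁰ ≠ 0`. -/
noncomputable def bartKT (p : ℕ) (w : Fin p → ℝ) (P : ℕ → ℝ) (D : ℕ) (γ : ℝ)
    (d : ℕ) (nm n0 np : Fin p → ℕ) : ℝ :=
  if ∀ i, nm i + n0 i + np i = 0 then 1
  else if D ≤ d then
    (if ∀ i, n0 i = 0 then 1 else 1 - (1 - γ) * P D)
  else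
    1 - P d * (1 - (1 / bartW p w (fun i => nm i + n0 i + np i)) *
      ∑ i ∈ Finset.univ.filter (fun i => nm i + n0 i + np i ≠ 0),
        (w i / ((nm i + n0 i + np i : ℕ) : ℝ)) *
          ((∑ k ∈ Finset.range (nm i),
              bartKT p w P D γ (d+1) (Function.update nm i k) n0 np) +
           (∑ k ∈ Finset.range (np i),
              bartKT p w P D γ (d+1) nm n0 (Function.update np i k))))
termination_by D - d
decreasing_by all_goals omega

private lemma sum_lt_left {p : ℕ} (nm np : Fin p → ℕ) (i : Fin p) (k : ℕ) (hk : k < nm i) :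
    ∑ j, (Function.update nm i k j + np j) < ∑ j, (nm j + np j) := by
  refine Finset.sum_lt_sum (fun j _ => ?_) ⟨i, Finset.mem_univ i, ?_⟩
  · rcases eq_or_ne j i with rfl | hj
    · simp only [Function.update_self]; omega
    · simp only [Function.update_of_ne hj]; omega
  · simp only [Function.update_self]; omega

private lemma sum_lt_right {p : ℕ} (nm np : Fin p → ℕ) (i : Fin p) (k : ℕ) (hk : k < np i) :
    ∑ j, (nm j + Function.update np i k j) < ∑ j, (nm j + np j) := by
  refine Finset.sum_lt_sum (fun j _ => ?_) ⟨i, Finset.mem_univ i, ?_⟩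
  · rcases eq_or_ne j i with rfl | hj
    · simp only [Function.update_self]; omega
    · simp only [Function.update_of_ne hj]; omega
  · simp only [Function.update_self]; omega

private lemma bartW_pos {p : ℕ} {w : Fin p → ℝ} (hw : ∀ i, 0 < w i) (v : Fin p → ℕ)
    (h : ∃ i, v i ≠ 0) : 0 < bartW p w v := by
  obtain ⟨i, hi⟩ := h
  exact Finset.sum_pos (fun j _ => hw j)
    ⟨i, Finset.mem_filter.mpr ⟨Finset.mem_univ i, hi⟩⟩

private theorem bartK_eq_one_of_n0 {p : ℕ} {w : Fin p → ℝ} (hw : ∀ i, 0 < w i) (P : ℕ → ℝ)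
    (d : ℕ) (nm n0 np : Fin p → ℕ) (h0 : ∀ i, n0 i = 0) :
    bartK p w P d nm n0 np = 1 := by
  suffices H : ∀ N nm n0 np, (∑ i, (nm i + np i)) = N → (∀ i, n0 i = 0) →
      ∀ d, bartK p w P d nm n0 np = 1 from H _ nm n0 np rfl h0 d
  intro N
  induction N using Nat.strong_induction_on with
  | _ N IH =>
    intro nm n0 np hN h0 d
    rw [bartK]
    by_cases hA : ∀ i, nm i + n0 i + np i = 0
    · rw [if_pos hA]
    · rw [if_neg hA]
      have hstep : (∑ i ∈ Finset.univ.filter (fun i => nm i + n0 i + np i ≠ 0),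
          (w i / ((nm i + n0 i + np i : ℕ) : ℝ)) *
            ((∑ k ∈ (Finset.range (nm i)).attach,
                bartK p w P (d+1) (Function.update nm i k.1) n0 np) +
             (∑ k ∈ (Finset.range (np i)).attach,
                bartK p w P (d+1) nm n0 (Function.update np i k.1))))
          = bartW p w (fun i => nm i + n0 i + np i) := by
        rw [bartW]
        refine Finset.sum_congr rfl fun i hi => ?_
        have hni : nm i + n0 i + np i ≠ 0 := (Finset.mem_filter.mp hi).2
        have h1 : (∑ k ∈ (Finset.range (nm i)).attach,
            bartK p w P (d+1) (Function.update nm i k.1) n0 np) = (nm i : ℝ) := by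
          rw [Finset.sum_attach (Finset.range (nm i))
            (fun k => bartK p w P (d+1) (Function.update nm i k) n0 np)]
          rw [Finset.sum_congr rfl (fun k hk => IH _ (hN ▸ sum_lt_left nm np i k
            (Finset.mem_range.mp hk)) _ _ _ rfl h0 (d+1))]
          simp
        have h2 : (∑ k ∈ (Finset.range (np i)).attach,
            bartK p w P (d+1) nm n0 (Function.update np i k.1)) = (np i : ℝ) := by
          rw [Finset.sum_attach (Finset.range (np i))
            (fun k => bartK p w P (d+1) nm n0 (Function.update np i k))]
          rw [Finset.sum_congr rfl (fun k hk => IH _ (hN ▸ sum_lt_right nm np i k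
            (Finset.mem_range.mp hk)) _ _ _ rfl h0 (d+1))]
          simp
        rw [h1, h2]
        have hc : ((nm i + n0 i + np i : ℕ) : ℝ) ≠ 0 := Nat.cast_ne_zero.mpr hni
        rw [div_mul_eq_mul_div, div_eq_iff hc]
        rw [h0 i]
        push_cast
        ring
      rw [hstep]
      have hW : 0 < bartW p w (fun i => nm i + n0 i + np i) := by
        apply bartW_pos hw
        push_neg at hA
        exact hA
      rw [one_div, inv_mul_cancel₀ hW.ne']
      ring

private theorem bartKT_eq_one_of_n0 {p : ℕ} {w : Fin p → ℝ} (hw : ∀ i, 0 < w i) (P : ℕ → ℝ)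
    (D : ℕ) (γ : ℝ) (d : ℕ) (nm n0 np : Fin p → ℕ) (h0 : ∀ i, n0 i = 0) :
    bartKT p w P D γ d nm n0 np = 1 := by
  suffices H : ∀ t d, D - d = t → ∀ nm n0 np, (∀ i, n0 i = 0) →
      bartKT p w P D γ d nm n0 np = 1 from H _ d rfl nm n0 np h0
  intro t
  induction t with
  | zero =>
    intro d ht nm n0 np h0
    rw [bartKT]
    by_cases hA : ∀ i, nm i + n0 i + np i = 0
    · rw [if_pos hA]
    · rw [if_neg hA, if_pos (show D ≤ d by omega), if_pos h0]
  | succ t IH =>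
    intro d ht nm n0 np h0
    rw [bartKT]
    by_cases hA : ∀ i, nm i + n0 i + np i = 0
    · rw [if_pos hA]
    · rw [if_neg hA, if_neg (by omega : ¬ D ≤ d)]
      have hstep : (∑ i ∈ Finset.univ.filter (fun i => nm i + n0 i + np i ≠ 0),
          (w i / ((nm i + n0 i + np i : ℕ) : ℝ)) *
            ((∑ k ∈ Finset.range (nm i),
                bartKT p w P D γ (d+1) (Function.update nm i k) n0 np) +
             (∑ k ∈ Finset.range (np i),
                bartKT p w P D γ (d+1) nm n0 (Function.update np i k))))
          = bartW p w (fun i => nm i + n0 i + np i) := by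
        rw [bartW]
        refine Finset.sum_congr rfl fun i hi => ?_
        have hni : nm i + n0 i + np i ≠ 0 := (Finset.mem_filter.mp hi).2
        rw [Finset.sum_congr rfl (fun k _ => IH (d+1) (by omega) _ _ _ h0),
            Finset.sum_congr rfl (fun k _ => IH (d+1) (by omega) _ _ _ h0)]
        simp only [Finset.sum_const, Finset.card_range, nsmul_eq_mul, mul_one]
        have hc : ((nm i + n0 i + np i : ℕ) : ℝ) ≠ 0 := Nat.cast_ne_zero.mpr hni
        rw [div_mul_eq_mul_div, div_eq_iff hc]
        rw [h0 i]
        push_cast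
        ring
      rw [hstep]
      have hW : 0 < bartW p w (fun i => nm i + n0 i + np i) := by
        apply bartW_pos hw
        push_neg at hA
        exact hA
      rw [one_div, inv_mul_cancel₀ hW.ne']
      ring

private lemma attach_sum_bounds (m : ℕ) (f : ℕ → ℝ) (hf : ∀ k < m, 0 ≤ f k ∧ f k ≤ 1) :
    0 ≤ (∑ k ∈ (Finset.range m).attach, f k.1) ∧
      (∑ k ∈ (Finset.range m).attach, f k.1) ≤ (m : ℝ) := by
  constructor
  · exact Finset.sum_nonneg fun k _ => (hf k.1 (Finset.mem_range.mp k.2)).1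
  · calc (∑ k ∈ (Finset.range m).attach, f k.1)
        ≤ ∑ _k ∈ (Finset.range m).attach, 1 :=
          Finset.sum_le_sum fun k _ => (hf k.1 (Finset.mem_range.mp k.2)).2
      _ = (m : ℝ) := by simp

private theorem bartK_bds {p : ℕ} {w : Fin p → ℝ} (hw : ∀ i, 0 < w i) {P : ℕ → ℝ}
    (hP : ∀ d, P d ∈ Set.Icc (0 : ℝ) 1) (d : ℕ) (nm n0 np : Fin p → ℕ) :
    1 - P d ≤ bartK p w P d nm n0 np ∧ bartK p w P d nm n0 np ≤ 1 := by
  suffices H : ∀ N nm n0 np, (∑ i, (nm i + np i)) = N → ∀ d,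
      1 - P d ≤ bartK p w P d nm n0 np ∧ bartK p w P d nm n0 np ≤ 1 from
    H _ nm n0 np rfl d
  intro N
  induction N using Nat.strong_induction_on with
  | _ N IH =>
    intro nm n0 np hN d
    rw [bartK]
    by_cases hA : ∀ i, nm i + n0 i + np i = 0
    · rw [if_pos hA]
      exact ⟨by linarith [(hP d).1], le_refl 1⟩
    · rw [if_neg hA]
      have hW : 0 < bartW p w (fun i => nm i + n0 i + np i) :=
        bartW_pos hw _ (by push_neg at hA; exact hA)
      have hterm : ∀ i ∈ Finset.univ.filter (fun i => nm i + n0 i + np i ≠ 0),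
          (0:ℝ) ≤ (w i / ((nm i + n0 i + np i : ℕ) : ℝ)) *
            ((∑ k ∈ (Finset.range (nm i)).attach,
                bartK p w P (d+1) (Function.update nm i k.1) n0 np) +
             (∑ k ∈ (Finset.range (np i)).attach,
                bartK p w P (d+1) nm n0 (Function.update np i k.1))) ∧
          (w i / ((nm i + n0 i + np i : ℕ) : ℝ)) *
            ((∑ k ∈ (Finset.range (nm i)).attach,
                bartK p w P (d+1) (Function.update nm i k.1) n0 np) +
             (∑ k ∈ (Finset.range (np i)).attach,
                bartK p w P (d+1) nm n0 (Function.update np i k.1))) ≤ w i := by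
        intro i hi
        have hni : nm i + n0 i + np i ≠ 0 := (Finset.mem_filter.mp hi).2
        have hcn : ((nm i + n0 i + np i : ℕ) : ℝ) ≠ 0 := Nat.cast_ne_zero.mpr hni
        have hcnn : (0:ℝ) ≤ w i / ((nm i + n0 i + np i : ℕ) : ℝ) :=
          div_nonneg (hw i).le (Nat.cast_nonneg _)
        have hAb := attach_sum_bounds (nm i)
          (fun k => bartK p w P (d+1) (Function.update nm i k) n0 np) (fun k hk => by
            have := IH _ (hN ▸ sum_lt_left nm np i k hk) _ n0 _ rfl (d+1)
            exact ⟨by linarith [(hP (d+1)).2, this.1], this.2⟩)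
        have hBb := attach_sum_bounds (np i)
          (fun k => bartK p w P (d+1) nm n0 (Function.update np i k)) (fun k hk => by
            have := IH _ (hN ▸ sum_lt_right nm np i k hk) _ n0 _ rfl (d+1)
            exact ⟨by linarith [(hP (d+1)).2, this.1], this.2⟩)
        constructor
        · exact mul_nonneg hcnn (add_nonneg hAb.1 hBb.1)
        · have hsum : (∑ k ∈ (Finset.range (nm i)).attach,
                bartK p w P (d+1) (Function.update nm i k.1) n0 np) +
              (∑ k ∈ (Finset.range (np i)).attach,
                bartK p w P (d+1) nm n0 (Function.update np i k.1)) ≤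
              ((nm i + n0 i + np i : ℕ) : ℝ) := by
            push_cast
            have := hAb.2
            have := hBb.2
            have : (0:ℝ) ≤ (n0 i : ℕ) := Nat.cast_nonneg _
            push_cast at *
            linarith
          calc (w i / ((nm i + n0 i + np i : ℕ) : ℝ)) * _ ≤
              (w i / ((nm i + n0 i + np i : ℕ) : ℝ)) * ((nm i + n0 i + np i : ℕ) : ℝ) :=
                mul_le_mul_of_nonneg_left hsum hcnn
            _ = w i := div_mul_cancel₀ (w i) hcn
      have hS0 : (0:ℝ) ≤ ∑ i ∈ Finset.univ.filter (fun i => nm i + n0 i + np i ≠ 0),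
          (w i / ((nm i + n0 i + np i : ℕ) : ℝ)) *
            ((∑ k ∈ (Finset.range (nm i)).attach,
                bartK p w P (d+1) (Function.update nm i k.1) n0 np) +
             (∑ k ∈ (Finset.range (np i)).attach,
                bartK p w P (d+1) nm n0 (Function.update np i k.1))) :=
        Finset.sum_nonneg fun i hi => (hterm i hi).1
      have hSW : (∑ i ∈ Finset.univ.filter (fun i => nm i + n0 i + np i ≠ 0),
          (w i / ((nm i + n0 i + np i : ℕ) : ℝ)) *
            ((∑ k ∈ (Finset.range (nm i)).attach,
                bartK p w P (d+1) (Function.update nm i k.1) n0 np) +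
             (∑ k ∈ (Finset.range (np i)).attach,
                bartK p w P (d+1) nm n0 (Function.update np i k.1)))) ≤
          bartW p w (fun i => nm i + n0 i + np i) := by
        rw [bartW]
        exact Finset.sum_le_sum fun i hi => (hterm i hi).2
      have hinv : (0:ℝ) ≤ 1 / bartW p w (fun i => nm i + n0 i + np i) := by positivity
      have hcS1 : (1 / bartW p w (fun i => nm i + n0 i + np i)) *
          (∑ i ∈ Finset.univ.filter (fun i => nm i + n0 i + np i ≠ 0),
            (w i / ((nm i + n0 i + np i : ℕ) : ℝ)) *
              ((∑ k ∈ (Finset.range (nm i)).attach,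
                  bartK p w P (d+1) (Function.update nm i k.1) n0 np) +
               (∑ k ∈ (Finset.range (np i)).attach,
                  bartK p w P (d+1) nm n0 (Function.update np i k.1)))) ≤ 1 := by
        rw [one_div]
        calc _ ≤ (bartW p w (fun i => nm i + n0 i + np i))⁻¹ *
            bartW p w (fun i => nm i + n0 i + np i) :=
              mul_le_mul_of_nonneg_left hSW (by positivity)
          _ = 1 := inv_mul_cancel₀ hW.ne'
      have hcS0 : (0:ℝ) ≤ (1 / bartW p w (fun i => nm i + n0 i + np i)) *
          (∑ i ∈ Finset.univ.filter (fun i => nm i + n0 i + np i ≠ 0),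
            (w i / ((nm i + n0 i + np i : ℕ) : ℝ)) *
              ((∑ k ∈ (Finset.range (nm i)).attach,
                  bartK p w P (d+1) (Function.update nm i k.1) n0 np) +
               (∑ k ∈ (Finset.range (np i)).attach,
                  bartK p w P (d+1) nm n0 (Function.update np i k.1)))) :=
        mul_nonneg hinv hS0
      constructor
      · nlinarith [(hP d).1, (hP d).2]
      · nlinarith [(hP d).1, (hP d).2]

private noncomputable def bartS (p : ℕ) (w : Fin p → ℝ) (nm n0 np : Fin p → ℕ)
    (f g : Fin p → ℕ → ℝ) : ℝ :=
  ∑ i ∈ Finset.univ.filter (fun i => nm i + n0 i + np i ≠ 0),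
    (w i / ((nm i + n0 i + np i : ℕ) : ℝ)) *
      ((∑ k ∈ Finset.range (nm i), f i k) + (∑ k ∈ Finset.range (np i), g i k))

private lemma bartS_lin (p : ℕ) (w : Fin p → ℝ) (nm n0 np : Fin p → ℕ) (γ : ℝ)
    (f0 f1 fγ g0 g1 gγ : Fin p → ℕ → ℝ)
    (hf : ∀ i k, fγ i k = (1 - γ) * f0 i k + γ * f1 i k)
    (hg : ∀ i k, gγ i k = (1 - γ) * g0 i k + γ * g1 i k) :
    bartS p w nm n0 np fγ gγ =
      (1 - γ) * bartS p w nm n0 np f0 g0 + γ * bartS p w nm n0 np f1 g1 := by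
  unfold bartS
  rw [Finset.mul_sum, Finset.mul_sum, ← Finset.sum_add_distrib]
  refine Finset.sum_congr rfl fun i _ => ?_
  rw [Finset.sum_congr rfl fun k _ => hf i k, Finset.sum_congr rfl fun k _ => hg i k,
    Finset.sum_add_distrib, Finset.sum_add_distrib, ← Finset.mul_sum, ← Finset.mul_sum,
    ← Finset.mul_sum, ← Finset.mul_sum]
  ring

private lemma bartS_mono (p : ℕ) (w : Fin p → ℝ) (hw : ∀ i, 0 < w i)
    (nm n0 np : Fin p → ℕ) (f f' g g' : Fin p → ℕ → ℝ)
    (hf : ∀ i k, f i k ≤ f' i k) (hg : ∀ i k, g i k ≤ g' i k) :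
    bartS p w nm n0 np f g ≤ bartS p w nm n0 np f' g' := by
  unfold bartS
  refine Finset.sum_le_sum fun i _ => ?_
  exact mul_le_mul_of_nonneg_left
    (add_le_add (Finset.sum_le_sum fun k _ => hf i k) (Finset.sum_le_sum fun k _ => hg i k))
    (div_nonneg (hw i).le (Nat.cast_nonneg _))

private lemma step_interp (Pd c S0 S1 Sg g : ℝ) (h : Sg = (1 - g) * S0 + g * S1) :
    1 - Pd * (1 - c * Sg) = (1 - g) * (1 - Pd * (1 - c * S0)) + g * (1 - Pd * (1 - c * S1)) := by
  subst h; ring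

private lemma step_mono (Pd c S S' : ℝ) (hP : 0 ≤ Pd) (hc : 0 ≤ c) (h : S ≤ S') :
    1 - Pd * (1 - c * S) ≤ 1 - Pd * (1 - c * S') := by
  nlinarith [mul_nonneg (mul_nonneg hP hc) (sub_nonneg.mpr h)]

private lemma bartKT_of_zero {p : ℕ} {w : Fin p → ℝ} {P : ℕ → ℝ} {D : ℕ} {γ : ℝ} {d : ℕ}
    {nm n0 np : Fin p → ℕ} (hA : ∀ i, nm i + n0 i + np i = 0) :
    bartKT p w P D γ d nm n0 np = 1 := by
  rw [bartKT, if_pos hA]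

private lemma bartK_of_zero {p : ℕ} {w : Fin p → ℝ} {P : ℕ → ℝ} {d : ℕ}
    {nm n0 np : Fin p → ℕ} (hA : ∀ i, nm i + n0 i + np i = 0) :
    bartK p w P d nm n0 np = 1 := by
  rw [bartK, if_pos hA]

private lemma bartKT_base {p : ℕ} {w : Fin p → ℝ} {P : ℕ → ℝ} {D : ℕ} {γ : ℝ} {d : ℕ}
    {nm n0 np : Fin p → ℕ} (hA : ¬ ∀ i, nm i + n0 i + np i = 0) (hD : D ≤ d)
    (h0 : ¬ ∀ i, n0 i = 0) :
    bartKT p w P D γ d nm n0 np = 1 - (1 - γ) * P D := by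
  rw [bartKT, if_neg hA, if_pos hD, if_neg h0]

private lemma bartKT_step {p : ℕ} {w : Fin p → ℝ} {P : ℕ → ℝ} {D : ℕ} {γ : ℝ} {d : ℕ}
    {nm n0 np : Fin p → ℕ} (hA : ¬ ∀ i, nm i + n0 i + np i = 0) (hD : ¬ D ≤ d) :
    bartKT p w P D γ d nm n0 np =
      1 - P d * (1 - (1 / bartW p w (fun i => nm i + n0 i + np i)) *
        bartS p w nm n0 np
          (fun i k => bartKT p w P D γ (d+1) (Function.update nm i k) n0 np)
          (fun i k => bartKT p w P D γ (d+1) nm n0 (Function.update np i k))) := by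
  rw [bartKT, if_neg hA, if_neg hD]; rfl

private lemma bartK_step {p : ℕ} {w : Fin p → ℝ} {P : ℕ → ℝ} {d : ℕ}
    {nm n0 np : Fin p → ℕ} (hA : ¬ ∀ i, nm i + n0 i + np i = 0) :
    bartK p w P d nm n0 np =
      1 - P d * (1 - (1 / bartW p w (fun i => nm i + n0 i + np i)) *
        bartS p w nm n0 np
          (fun i k => bartK p w P (d+1) (Function.update nm i k) n0 np)
          (fun i k => bartK p w P (d+1) nm n0 (Function.update np i k))) := by
  rw [bartK, if_neg hA]
  have hsum : (∑ i ∈ Finset.univ.filter (fun i => nm i + n0 i + np i ≠ 0),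
      (w i / ((nm i + n0 i + np i : ℕ) : ℝ)) *
        ((∑ k ∈ (Finset.range (nm i)).attach,
            bartK p w P (d+1) (Function.update nm i k.1) n0 np) +
         (∑ k ∈ (Finset.range (np i)).attach,
            bartK p w P (d+1) nm n0 (Function.update np i k.1)))) =
      bartS p w nm n0 np
        (fun i k => bartK p w P (d+1) (Function.update nm i k) n0 np)
        (fun i k => bartK p w P (d+1) nm n0 (Function.update np i k)) := by
    unfold bartS
    refine Finset.sum_congr rfl fun i _ => ?_
    rw [Finset.sum_attach (Finset.range (nm i))
        (fun k => bartK p w P (d+1) (Function.update nm i k) n0 np),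
      Finset.sum_attach (Finset.range (np i))
        (fun k => bartK p w P (d+1) nm n0 (Function.update np i k))]
  rw [hsum]

/-- Theorem 3: for `d ≤ D` and `γ ∈ [0,1]`, the truncated sub-correlation `k^D_{d,γ}`
linearly interpolates in `γ` between `k^D_{d,0}` and `k^D_{d,1}`, which are respectively
a lower and an upper bound on the exact sub-correlation `k_d`. -/
theorem bartKT_interpolates_and_bounds
    (p : ℕ) (hp : 1 ≤ p) (w : Fin p → ℝ) (hw : ∀ i, 0 < w i)
    (P : ℕ → ℝ) (hP : ∀ d, P d ∈ Set.Icc (0 : ℝ) 1)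
    (D d : ℕ) (hd : d ≤ D) (γ : ℝ) (hγ : γ ∈ Set.Icc (0 : ℝ) 1)
    (nm n0 np : Fin p → ℕ) :
    bartKT p w P D γ d nm n0 np =
        (1 - γ) * bartKT p w P D 0 d nm n0 np + γ * bartKT p w P D 1 d nm n0 np ∧
    bartKT p w P D 0 d nm n0 np ≤ bartK p w P d nm n0 np ∧
    bartK p w P d nm n0 np ≤ bartKT p w P D 1 d nm n0 np := by
  suffices H : ∀ t d, d ≤ D → D - d = t → ∀ nm n0 np,
      bartKT p w P D γ d nm n0 np =
          (1 - γ) * bartKT p w P D 0 d nm n0 np + γ * bartKT p w P D 1 d nm n0 np ∧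
      bartKT p w P D 0 d nm n0 np ≤ bartK p w P d nm n0 np ∧
      bartK p w P d nm n0 np ≤ bartKT p w P D 1 d nm n0 np from
    H (D - d) d hd rfl nm n0 np
  intro t
  induction t with
  | zero =>
    intro d hdD ht nm n0 np
    have hde : d = D := by omega
    subst hde
    by_cases hA : ∀ i, nm i + n0 i + np i = 0
    · rw [bartKT_of_zero hA, bartKT_of_zero hA, bartKT_of_zero hA, bartK_of_zero hA]
      exact ⟨by ring, le_refl 1, le_refl 1⟩
    · by_cases h0 : ∀ i, n0 i = 0
      · rw [bartKT_eq_one_of_n0 hw P d γ d nm n0 np h0,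
          bartKT_eq_one_of_n0 hw P d 0 d nm n0 np h0,
          bartKT_eq_one_of_n0 hw P d 1 d nm n0 np h0,
          bartK_eq_one_of_n0 hw P d nm n0 np h0]
        exact ⟨by ring, le_refl 1, le_refl 1⟩
      · rw [bartKT_base hA (le_refl d) h0, bartKT_base hA (le_refl d) h0,
          bartKT_base hA (le_refl d) h0]
        have hb := bartK_bds hw hP d nm n0 np
        exact ⟨by ring, by linarith [hb.1], by linarith [hb.2]⟩
  | succ t IH =>
    intro d hdD ht nm n0 np
    have hnD : ¬ D ≤ d := by omega
    by_cases hA : ∀ i, nm i + n0 i + np i = 0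
    · rw [bartKT_of_zero hA, bartKT_of_zero hA, bartKT_of_zero hA, bartK_of_zero hA]
      exact ⟨by ring, le_refl 1, le_refl 1⟩
    · have hW : 0 < bartW p w (fun i => nm i + n0 i + np i) :=
        bartW_pos hw _ (by push_neg at hA; exact hA)
      have hc0 : (0:ℝ) ≤ 1 / bartW p w (fun i => nm i + n0 i + np i) := by positivity
      have IH' := fun nm' n0' np' => IH (d+1) (by omega) (by omega) nm' n0' np'
      refine ⟨?_, ?_, ?_⟩
      · rw [bartKT_step hA hnD, bartKT_step hA hnD, bartKT_step hA hnD]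
        exact step_interp _ _ _ _ _ _ (bartS_lin p w nm n0 np γ _ _ _ _ _ _
          (fun i k => (IH' _ _ _).1) (fun i k => (IH' _ _ _).1))
      · rw [bartKT_step hA hnD, bartK_step hA]
        exact step_mono _ _ _ _ (hP d).1 hc0 (bartS_mono p w hw nm n0 np _ _ _ _
          (fun i k => (IH' _ _ _).2.1) (fun i k => (IH' _ _ _).2.1))
      · rw [bartKT_step hA hnD, bartK_step hA]
        exact step_mono _ _ _ _ (hP d).1 hc0 (bartS_mono p w hw nm n0 np _ _ _ _
          (fun i k => (IH' _ _ _).2.2) (fun i k => (IH' _ _ _).2.2))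
end
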